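/- For all n ≥ 1, the number of permutations of [n] avoiding both patterns 132 and 2341 equals the Fibonacci number F_{2n−1}. -/

import Mathlib

/-- A word `π` contains the pattern `τ` if some subsequence of `π` is
order-isomorphic to `τ`. -/
def containsPat {n k : ℕ} (π : Fin n → Fin n) (τ : Fin k → Fin k) : Prop :=
  ∃ f : Fin k → Fin n, StrictMono f ∧ ∀ i j : Fin k, τ i < τ j ↔ π (f i) < π (f j)

/-- `π` avoids the pattern `τ`. -/
def avoidsPat {n k : ℕ} (π : Fin n → Fin n) (τ : Fin k → Fin k) : Prop :=
  ¬ containsPat π τ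
namespace Stmt2Aux

instance {n k : ℕ} (π : Fin n → Fin n) (τ : Fin k → Fin k) : Decidable (containsPat π τ) := by
  unfold containsPat; infer_instance

instance {n k : ℕ} (π : Fin n → Fin n) (τ : Fin k → Fin k) : Decidable (avoidsPat π τ) := by
  unfold avoidsPat; infer_instance

lemma contains021_iff {n : ℕ} (π : Fin n → Fin n) :
    containsPat π ![0,2,1] ↔ ∃ a b c : Fin n, a < b ∧ b < c ∧ π a < π c ∧ π c < π b := by
  constructor
  · rintro ⟨f, hf, h⟩
    exact ⟨f 0, f 1, f 2, hf (by decide), hf (by decide),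
      (h 0 2).mp (by decide), (h 2 1).mp (by decide)⟩
  · rintro ⟨a, b, c, hab, hbc, h1, h2⟩
    have hpab : π a < π b := h1.trans h2
    refine ⟨![a,b,c], ?_, ?_⟩
    · rw [Fin.strictMono_iff_lt_succ]
      intro i
      fin_cases i <;> simp [hab, hbc, Fin.castSucc, Fin.castAdd, Fin.castLE]
    · intro i j
      fin_cases i <;> fin_cases j <;>
        simp only [Matrix.cons_val_zero, Matrix.cons_val_one, Matrix.head_cons,
          Matrix.cons_val_two, Matrix.tail_cons, Fin.mk_zero, Fin.mk_one] <;>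
        constructor <;> intro h <;>
        first
          | exact h1 | exact h2 | exact hpab
          | exact absurd h (by decide)
          | exact absurd h (lt_asymm h1) | exact absurd h (lt_asymm h2)
          | exact absurd h (lt_asymm hpab)
          | exact absurd h (lt_irrefl _)
          | decide

lemma contains1230_iff {n : ℕ} (π : Fin n → Fin n) :
    containsPat π ![1,2,3,0] ↔ ∃ a b c d : Fin n, a < b ∧ b < c ∧ c < d ∧
      π d < π a ∧ π a < π b ∧ π b < π c := by
  constructor
  · rintro ⟨f, hf, h⟩
    exact ⟨f 0, f 1, f 2, f 3, hf (by decide), hf (by decide), hf (by decide),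
      (h 3 0).mp (by decide), (h 0 1).mp (by decide), (h 1 2).mp (by decide)⟩
  · rintro ⟨a, b, c, d, hab, hbc, hcd, h1, h2, h3⟩
    have hac : π a < π c := h2.trans h3
    have hdb : π d < π b := h1.trans h2
    have hdc : π d < π c := hdb.trans h3
    refine ⟨![a,b,c,d], ?_, ?_⟩
    · rw [Fin.strictMono_iff_lt_succ]
      intro i
      fin_cases i <;> simp [hab, hbc, hcd, Fin.castSucc, Fin.castAdd, Fin.castLE]
    · intro i j
      fin_cases i <;> fin_cases j <;>
        simp only [Matrix.cons_val_zero, Matrix.cons_val_one, Matrix.head_cons,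
          Matrix.cons_val_two, Matrix.tail_cons, Matrix.cons_val_three,
          Fin.mk_zero, Fin.mk_one] <;>
        constructor <;> intro h <;>
        first
          | exact h1 | exact h2 | exact h3 | exact hac | exact hdb | exact hdc
          | exact absurd h (by decide)
          | exact absurd h (lt_asymm h1) | exact absurd h (lt_asymm h2)
          | exact absurd h (lt_asymm h3) | exact absurd h (lt_asymm hac)
          | exact absurd h (lt_asymm hdb) | exact absurd h (lt_asymm hdc)
          | exact absurd h (lt_irrefl _)
          | decide


lemma card_le_of_lt {n : ℕ} (π : Equiv.Perm (Fin n)) (s : Finset (Fin n)) (x : Fin n)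
    (h : ∀ j ∈ s, π j < π x) : s.card ≤ (π x).val := by
  have h1 : s.image π ⊆ Finset.Iio (π x) := by
    intro v hv
    rw [Finset.mem_image] at hv
    obtain ⟨j, hj, rfl⟩ := hv
    exact Finset.mem_Iio.mpr (h j hj)
  calc s.card = (s.image π).card := (Finset.card_image_of_injective s π.injective).symm
    _ ≤ (Finset.Iio (π x)).card := Finset.card_le_card h1
    _ = (π x).val := Fin.card_Iio _

section Down

variable {N : ℕ} (π : Equiv.Perm (Fin (N+1)))
  (h021 : avoidsPat ⇑π ![0,2,1]) (h1230 : avoidsPat ⇑π ![1,2,3,0])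
  (p : Fin (N+1)) (hp : π p = Fin.last N)

include hp

lemma ne_last_of_ne {j : Fin (N+1)} (hj : j ≠ p) : (π j).val ≠ N := by
  intro h
  exact hj (π.injective (by rw [hp]; exact Fin.ext h))

include h021

lemma D1 : ∀ i j : Fin (N+1), i ≤ p → p < j → π j < π i := by
  intro i j hip hpj
  rcases eq_or_lt_of_le hip with rfl | hip
  · have := ne_last_of_ne π _ hp (ne_of_gt hpj)
    have h2 := (π j).isLt
    rw [hp]
    exact Fin.lt_def.mpr (by simp [Fin.last]; omega)
  · by_contra hc
    push_neg at hc
    have hne : π i ≠ π j := fun e => (ne_of_lt (hip.trans hpj)) (π.injective e)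
    have hij : π i < π j := lt_of_le_of_ne hc hne
    have hjlast : π j < π p := by
      have := ne_last_of_ne π _ hp (ne_of_gt hpj)
      rw [hp]
      exact Fin.lt_def.mpr (by simp [Fin.last]; omega)
    exact h021 ((contains021_iff ⇑π).mpr ⟨i, p, j, hip, hpj, hij, hjlast⟩)

include h1230

lemma D2 (hplt : p.val < N) : ∀ i j : Fin (N+1), i < j → j < p → π j < π i := by
  intro i j hij hjp
  by_contra hc
  push_neg at hc
  have hij' : π i < π j := lt_of_le_of_ne hc (fun e => (ne_of_lt hij) (π.injective e))
  have hlastpos : p < Fin.last N := Fin.lt_def.mpr (by simp [Fin.last]; omega)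
  have hql : π (Fin.last N) < π i := D1 π h021 p hp i (Fin.last N) (le_of_lt (hij.trans hjp)) hlastpos
  have hjq : π j < π p := by
    have := ne_last_of_ne π _ hp (ne_of_lt hjp)
    rw [hp]
    exact Fin.lt_def.mpr (by simp [Fin.last]; omega)
  exact h1230 ((contains1230_iff ⇑π).mpr ⟨i, j, p, Fin.last N, hij, hjp, hlastpos, hql, hij', hjq⟩)

lemma D3 (hplt : p.val < N) : ∀ i : Fin (N+1), i < p → (π i).val = N - 1 - i.val := by
  have up : ∀ k : ℕ, ∀ h : k < N + 1, (⟨k, h⟩ : Fin (N+1)) < p → (π ⟨k, h⟩).val + k + 1 ≤ N := by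
    intro k
    induction k with
    | zero =>
      intro h hlt
      have h1 := ne_last_of_ne π _ hp (ne_of_lt hlt)
      have h2 := (π (⟨0, h⟩ : Fin (N+1))).isLt
      omega
    | succ k ih =>
      intro h hlt
      have hk : k < N + 1 := by omega
      have hlt' : (⟨k, hk⟩ : Fin (N+1)) < p := lt_trans (by simp [Fin.lt_def]) hlt
      have h1 := ih hk hlt'
      have h2 : π ⟨k+1, h⟩ < π ⟨k, hk⟩ :=
        D2 π h021 h1230 p hp hplt ⟨k, hk⟩ ⟨k+1, h⟩ (by simp [Fin.lt_def]) hlt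
      rw [Fin.lt_def] at h2
      omega
  intro i hip
  have hup := up i.val i.isLt (by simpa using hip)
  simp only [Fin.eta] at hup
  have hlow : N - i.val - 1 ≤ (π i).val := by
    have hcard : (((Finset.Ioi i).erase p)).card ≤ (π i).val := by
      apply card_le_of_lt
      intro j hj
      rw [Finset.mem_erase, Finset.mem_Ioi] at hj
      obtain ⟨hjp, hij⟩ := hj
      rcases lt_trichotomy j p with hlt | rfl | hgt
      · exact D2 π h021 h1230 p hp hplt i j hij hlt
      · exact absurd rfl hjp
      · exact D1 π h021 p hp i j (le_of_lt hip) hgt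
    have hmem : p ∈ Finset.Ioi i := Finset.mem_Ioi.mpr hip
    rw [Finset.card_erase_of_mem hmem, Fin.card_Ioi] at hcard
    omega
  rw [Fin.lt_def] at hip
  omega

lemma D4 (hplt : p.val < N) : ∀ j : Fin (N+1), p < j → (π j).val < N - p.val := by
  intro j hpj
  rcases Nat.eq_zero_or_pos p.val with hz | hpos
  · have h1 := ne_last_of_ne π _ hp (ne_of_gt hpj)
    have h2 := (π j).isLt
    omega
  · have hq : ((⟨p.val - 1, by omega⟩ : Fin (N+1))) < p := Fin.lt_def.mpr (show p.val - 1 < p.val by omega)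
    have h1 := D3 π h021 h1230 p hp hplt ⟨p.val - 1, by omega⟩ hq
    have h2 := D1 π h021 p hp ⟨p.val - 1, by omega⟩ j (le_of_lt hq) hpj
    rw [Fin.lt_def] at h2
    simp at h1
    omega

end Down

section UpDown

variable {N : ℕ} (p : Fin (N+1))

/-- the permutation `N-1, N-2, ..., N-p, N, σ` -/
def upFun (σ : Equiv.Perm (Fin (N - p.val))) : Fin (N+1) → Fin (N+1) := fun i =>
  if h1 : i.val < p.val then ⟨N - 1 - i.val, by omega⟩
  else if h2 : i.val = p.val then Fin.last N
  else ⟨(σ ⟨i.val - (p.val + 1), by omega⟩).val, by have := (σ ⟨i.val - (p.val + 1), by omega⟩).isLt; omega⟩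

variable (σ : Equiv.Perm (Fin (N - p.val)))

lemma upFun_eval_lt {i : Fin (N+1)} (h : i.val < p.val) :
    (upFun p σ i).val = N - 1 - i.val := by
  unfold upFun; rw [dif_pos h]

lemma upFun_eval_eq {i : Fin (N+1)} (h : i.val = p.val) :
    (upFun p σ i).val = N := by
  unfold upFun; rw [dif_neg (by omega), dif_pos h]; rfl

lemma upFun_eval_gt {i : Fin (N+1)} (h : p.val < i.val) :
    (upFun p σ i).val = (σ ⟨i.val - (p.val + 1), by omega⟩).val := by
  unfold upFun; rw [dif_neg (by omega), dif_neg (by omega)]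

lemma upFun_ge {i : Fin (N+1)} (h : i.val ≤ p.val) :
    N - p.val ≤ (upFun p σ i).val := by
  rcases eq_or_lt_of_le h with h1 | h1
  · rw [upFun_eval_eq p σ h1]; omega
  · rw [upFun_eval_lt p σ h1]; omega

lemma upFun_lt_bound {i : Fin (N+1)} (h : p.val < i.val) :
    (upFun p σ i).val < N - p.val := by
  rw [upFun_eval_gt p σ h]
  exact (σ _).isLt

lemma upFun_inj : Function.Injective (upFun p σ) := by
  intro i j hij
  have hv := congrArg Fin.val hij
  apply Fin.ext
  rcases lt_trichotomy i.val p.val with h1 | h1 | h1 <;>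
    rcases lt_trichotomy j.val p.val with h2 | h2 | h2
  · rw [upFun_eval_lt p σ h1, upFun_eval_lt p σ h2] at hv
    have := i.isLt; have := j.isLt; omega
  · rw [upFun_eval_lt p σ h1, upFun_eval_eq p σ h2] at hv
    have := p.isLt; omega
  · have hb := upFun_lt_bound p σ h2
    rw [upFun_eval_lt p σ h1] at hv
    have := p.isLt; omega
  · rw [upFun_eval_eq p σ h1, upFun_eval_lt p σ h2] at hv
    have := p.isLt; omega
  · omega
  · have hb := upFun_lt_bound p σ h2
    rw [upFun_eval_eq p σ h1] at hv
    omega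
  · have hb := upFun_lt_bound p σ h1
    rw [upFun_eval_lt p σ h2] at hv
    have := p.isLt; omega
  · have hb := upFun_lt_bound p σ h1
    rw [upFun_eval_eq p σ h2] at hv
    omega
  · rw [upFun_eval_gt p σ h1, upFun_eval_gt p σ h2] at hv
    have h5 := σ.injective (Fin.ext hv)
    rw [Fin.mk.injEq] at h5
    omega

noncomputable def upPerm : Equiv.Perm (Fin (N+1)) :=
  Equiv.ofBijective (upFun p σ) (Finite.injective_iff_bijective.mp (upFun_inj p σ))

lemma upPerm_apply (i : Fin (N+1)) : upPerm p σ i = upFun p σ i := rfl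

lemma upPerm_avoids (hσ1 : avoidsPat ⇑σ ![0,2,1]) (hσ2 : avoidsPat ⇑σ ![1,2,3,0]) :
    avoidsPat ⇑(upPerm p σ) ![0,2,1] ∧ avoidsPat ⇑(upPerm p σ) ![1,2,3,0] := by
  constructor
  · intro hc
    rw [contains021_iff] at hc
    obtain ⟨a, b, c, hab, hbc, h1, h2⟩ := hc
    simp only [upPerm_apply, Fin.lt_def] at h1 h2
    rw [Fin.lt_def] at hab hbc
    -- c is in the tail
    have hcp : p.val < c.val := by
      by_contra hcp
      push_neg at hcp
      rcases eq_or_lt_of_le hcp with hceq | hclt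
      · -- c = p : upFun c = N, but h2 : upFun c < upFun b impossible
        rw [upFun_eval_eq p σ hceq] at h2
        have := (upFun p σ b).isLt
        omega
      · -- a < b < c < p, decreasing region
        have e1 := upFun_eval_lt p σ (show a.val < p.val by omega)
        have e2 := upFun_eval_lt p σ (show b.val < p.val by omega)
        omega
    have hap : p.val < a.val := by
      by_contra hap
      push_neg at hap
      have e1 := upFun_ge p σ hap
      have e2 := upFun_lt_bound p σ hcp
      omega
    have hbp : p.val < b.val := by omega
    -- lift to σ
    simp only [upFun_eval_gt p σ hap, upFun_eval_gt p σ hbp,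
      upFun_eval_gt p σ hcp] at h1 h2
    apply hσ1
    rw [contains021_iff]
    exact ⟨⟨a.val - (p.val+1), by omega⟩, ⟨b.val - (p.val+1), by omega⟩,
      ⟨c.val - (p.val+1), by omega⟩, by rw [Fin.lt_def]; simp; omega,
      by rw [Fin.lt_def]; simp; omega,
      Fin.lt_def.mpr h1, Fin.lt_def.mpr h2⟩
  · intro hc
    rw [contains1230_iff] at hc
    obtain ⟨a, b, c, d, hab, hbc, hcd, h1, h2, h3⟩ := hc
    simp only [upPerm_apply, Fin.lt_def] at h1 h2 h3
    rw [Fin.lt_def] at hab hbc hcd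
    have hbp : p.val < b.val := by
      by_contra hbp
      push_neg at hbp
      rcases eq_or_lt_of_le hbp with hbeq | hblt
      · rw [upFun_eval_eq p σ hbeq] at h3
        have := (upFun p σ c).isLt
        omega
      · have e1 := upFun_eval_lt p σ (show a.val < p.val by omega)
        have e2 := upFun_eval_lt p σ hblt
        omega
    have hap : p.val < a.val := by
      by_contra hap
      push_neg at hap
      have e1 := upFun_ge p σ hap
      have e2 := upFun_lt_bound p σ hbp
      omega
    have hcp : p.val < c.val := by omega
    have hdp : p.val < d.val := by omega
    simp only [upFun_eval_gt p σ hap, upFun_eval_gt p σ hbp,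
      upFun_eval_gt p σ hcp, upFun_eval_gt p σ hdp] at h1 h2 h3
    apply hσ2
    rw [contains1230_iff]
    exact ⟨⟨a.val - (p.val+1), by omega⟩, ⟨b.val - (p.val+1), by omega⟩,
      ⟨c.val - (p.val+1), by omega⟩, ⟨d.val - (p.val+1), by omega⟩,
      by rw [Fin.lt_def]; simp; omega, by rw [Fin.lt_def]; simp; omega,
      by rw [Fin.lt_def]; simp; omega,
      Fin.lt_def.mpr h1, Fin.lt_def.mpr h2, Fin.lt_def.mpr h3⟩

end UpDown

section Down2

variable {N : ℕ} (p : Fin (N+1))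

def downFun (π : Equiv.Perm (Fin (N+1))) : Fin (N - p.val) → Fin (N - p.val) := fun j =>
  if h : (π ⟨p.val + 1 + j.val, by omega⟩).val < N - p.val
  then ⟨(π ⟨p.val + 1 + j.val, by omega⟩).val, h⟩ else j

noncomputable def downPerm (π : Equiv.Perm (Fin (N+1))) : Equiv.Perm (Fin (N - p.val)) :=
  if h : Function.Injective (downFun p π) then
    Equiv.ofBijective _ (Finite.injective_iff_bijective.mp h) else 1

variable (π : Equiv.Perm (Fin (N+1)))

lemma downFun_eval (hgood : ∀ j : Fin (N+1), p < j → (π j).val < N - p.val)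
    (j : Fin (N - p.val)) :
    (downFun p π j).val = (π ⟨p.val + 1 + j.val, by omega⟩).val := by
  unfold downFun
  rw [dif_pos (hgood _ (by rw [Fin.lt_def]; simp; omega))]

lemma downFun_inj (hgood : ∀ j : Fin (N+1), p < j → (π j).val < N - p.val) :
    Function.Injective (downFun p π) := by
  intro x y h
  have hv := congrArg Fin.val h
  rw [downFun_eval p π hgood, downFun_eval p π hgood] at hv
  have h2 := π.injective (Fin.ext hv)
  rw [Fin.mk.injEq] at h2
  exact Fin.ext (by omega)

lemma downPerm_apply (hgood : ∀ j : Fin (N+1), p < j → (π j).val < N - p.val) :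
    ⇑(downPerm p π) = downFun p π := by
  unfold downPerm
  rw [dif_pos (downFun_inj p π hgood)]
  rfl

lemma downPerm_avoids (hgood : ∀ j : Fin (N+1), p < j → (π j).val < N - p.val)
    (h021 : avoidsPat ⇑π ![0,2,1]) (h1230 : avoidsPat ⇑π ![1,2,3,0]) :
    avoidsPat ⇑(downPerm p π) ![0,2,1] ∧ avoidsPat ⇑(downPerm p π) ![1,2,3,0] := by
  constructor
  · intro hc
    rw [contains021_iff] at hc
    obtain ⟨a, b, c, hab, hbc, h1, h2⟩ := hc
    rw [downPerm_apply p π hgood] at h1 h2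
    rw [Fin.lt_def] at h1 h2 hab hbc
    rw [downFun_eval p π hgood, downFun_eval p π hgood] at h1 h2
    apply h021
    rw [contains021_iff]
    exact ⟨⟨p.val + 1 + a.val, by omega⟩, ⟨p.val + 1 + b.val, by omega⟩,
      ⟨p.val + 1 + c.val, by omega⟩,
      by rw [Fin.lt_def]; simp; omega, by rw [Fin.lt_def]; simp; omega,
      Fin.lt_def.mpr h1, Fin.lt_def.mpr h2⟩
  · intro hc
    rw [contains1230_iff] at hc
    obtain ⟨a, b, c, d, hab, hbc, hcd, h1, h2, h3⟩ := hc
    rw [downPerm_apply p π hgood] at h1 h2 h3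
    rw [Fin.lt_def] at h1 h2 h3 hab hbc hcd
    rw [downFun_eval p π hgood, downFun_eval p π hgood] at h1 h2 h3
    apply h1230
    rw [contains1230_iff]
    exact ⟨⟨p.val + 1 + a.val, by omega⟩, ⟨p.val + 1 + b.val, by omega⟩,
      ⟨p.val + 1 + c.val, by omega⟩, ⟨p.val + 1 + d.val, by omega⟩,
      by rw [Fin.lt_def]; simp; omega, by rw [Fin.lt_def]; simp; omega,
      by rw [Fin.lt_def]; simp; omega,
      Fin.lt_def.mpr h1, Fin.lt_def.mpr h2, Fin.lt_def.mpr h3⟩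

lemma up_down (hplt : p.val < N)
    (h021 : avoidsPat ⇑π ![0,2,1]) (h1230 : avoidsPat ⇑π ![1,2,3,0])
    (hp : π p = Fin.last N) :
    upPerm p (downPerm p π) = π := by
  have hgood := D4 π h021 h1230 p hp hplt
  apply Equiv.ext
  intro i
  apply Fin.ext
  rw [upPerm_apply]
  rcases lt_trichotomy i.val p.val with h1 | h1 | h1
  · rw [upFun_eval_lt p _ h1]
    exact (D3 π h021 h1230 p hp hplt i (Fin.lt_def.mpr h1)).symm
  · rw [upFun_eval_eq p _ h1]
    have : i = p := Fin.ext h1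
    rw [this, hp]
    rfl
  · rw [upFun_eval_gt p _ h1]
    have e1 : (downPerm p π ⟨i.val - (p.val + 1), by omega⟩).val
        = (π ⟨p.val + 1 + (i.val - (p.val + 1)), by omega⟩).val := by
      rw [downPerm_apply p π hgood]
      exact downFun_eval p π hgood _
    rw [e1]
    congr 1
    apply congrArg
    apply Fin.ext
    simp
    omega

lemma down_up (σ : Equiv.Perm (Fin (N - p.val))) :
    downPerm p (upPerm p σ) = σ := by
  have hgood : ∀ j : Fin (N+1), p < j → ((upPerm p σ) j).val < N - p.val := by
    intro j hj
    exact upFun_lt_bound p σ (Fin.lt_def.mp hj)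
  apply Equiv.ext
  intro j
  apply Fin.ext
  rw [downPerm_apply p _ hgood, downFun_eval p _ hgood]
  rw [upPerm_apply, upFun_eval_gt p σ (by simp; omega)]
  congr 1
  apply congrArg
  apply Fin.ext
  simp

end Down2

section LastCase

variable {N : ℕ}

def upFunL (σ : Equiv.Perm (Fin N)) : Fin (N+1) → Fin (N+1) := fun i =>
  if h : i.val < N then ⟨(σ ⟨i.val, h⟩).val, by have := (σ ⟨i.val, h⟩).isLt; omega⟩
  else Fin.last N

variable (σ : Equiv.Perm (Fin N))

lemma upFunL_eval_lt {i : Fin (N+1)} (h : i.val < N) :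
    (upFunL σ i).val = (σ ⟨i.val, h⟩).val := by
  unfold upFunL; rw [dif_pos h]

lemma upFunL_eval_eq {i : Fin (N+1)} (h : ¬ i.val < N) :
    (upFunL σ i).val = N := by
  unfold upFunL; rw [dif_neg h]; rfl

lemma upFunL_inj : Function.Injective (upFunL σ) := by
  intro i j hij
  have hv := congrArg Fin.val hij
  apply Fin.ext
  by_cases h1 : i.val < N <;> by_cases h2 : j.val < N
  · rw [upFunL_eval_lt σ h1, upFunL_eval_lt σ h2] at hv
    have h5 := σ.injective (Fin.ext hv)
    rw [Fin.mk.injEq] at h5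
    exact h5
  · rw [upFunL_eval_lt σ h1, upFunL_eval_eq σ h2] at hv
    have := (σ ⟨i.val, h1⟩).isLt
    omega
  · rw [upFunL_eval_eq σ h1, upFunL_eval_lt σ h2] at hv
    have := (σ ⟨j.val, h2⟩).isLt
    omega
  · have := i.isLt; have := j.isLt; omega

noncomputable def upPermL : Equiv.Perm (Fin (N+1)) :=
  Equiv.ofBijective (upFunL σ) (Finite.injective_iff_bijective.mp (upFunL_inj σ))

lemma upPermL_apply (i : Fin (N+1)) : upPermL σ i = upFunL σ i := rfl

lemma upPermL_avoids (hσ1 : avoidsPat ⇑σ ![0,2,1]) (hσ2 : avoidsPat ⇑σ ![1,2,3,0]) :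
    avoidsPat ⇑(upPermL σ) ![0,2,1] ∧ avoidsPat ⇑(upPermL σ) ![1,2,3,0] := by
  constructor
  · intro hc
    rw [contains021_iff] at hc
    obtain ⟨a, b, c, hab, hbc, h1, h2⟩ := hc
    simp only [upPermL_apply, Fin.lt_def] at h1 h2
    rw [Fin.lt_def] at hab hbc
    have hc' : c.val < N := by
      by_contra h
      rw [upFunL_eval_eq σ h] at h2
      have := (upFunL σ b).isLt
      omega
    have ha' : a.val < N := by omega
    have hb' : b.val < N := by omega
    rw [upFunL_eval_lt σ ha'] at h1
    rw [upFunL_eval_lt σ hb'] at h2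
    rw [upFunL_eval_lt σ hc'] at h1 h2
    apply hσ1
    rw [contains021_iff]
    exact ⟨⟨a.val, ha'⟩, ⟨b.val, hb'⟩, ⟨c.val, hc'⟩,
      by rw [Fin.lt_def]; simpa, by rw [Fin.lt_def]; simpa,
      Fin.lt_def.mpr h1, Fin.lt_def.mpr h2⟩
  · intro hc
    rw [contains1230_iff] at hc
    obtain ⟨a, b, c, d, hab, hbc, hcd, h1, h2, h3⟩ := hc
    simp only [upPermL_apply, Fin.lt_def] at h1 h2 h3
    rw [Fin.lt_def] at hab hbc hcd
    have hd' : d.val < N := by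
      by_contra h
      rw [upFunL_eval_eq σ h] at h1
      have := (upFunL σ a).isLt
      omega
    have ha' : a.val < N := by omega
    have hb' : b.val < N := by omega
    have hc' : c.val < N := by omega
    rw [upFunL_eval_lt σ ha'] at h1 h2
    rw [upFunL_eval_lt σ hb'] at h2 h3
    rw [upFunL_eval_lt σ hc'] at h3
    rw [upFunL_eval_lt σ hd'] at h1
    apply hσ2
    rw [contains1230_iff]
    exact ⟨⟨a.val, ha'⟩, ⟨b.val, hb'⟩, ⟨c.val, hc'⟩, ⟨d.val, hd'⟩,
      by rw [Fin.lt_def]; simpa, by rw [Fin.lt_def]; simpa, by rw [Fin.lt_def]; simpa,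
      Fin.lt_def.mpr h1, Fin.lt_def.mpr h2, Fin.lt_def.mpr h3⟩

def downFunL (π : Equiv.Perm (Fin (N+1))) : Fin N → Fin N := fun j =>
  if h : (π ⟨j.val, by omega⟩).val < N then ⟨(π ⟨j.val, by omega⟩).val, h⟩ else j

noncomputable def downPermL (π : Equiv.Perm (Fin (N+1))) : Equiv.Perm (Fin N) :=
  if h : Function.Injective (downFunL π) then
    Equiv.ofBijective _ (Finite.injective_iff_bijective.mp h) else 1

variable (π : Equiv.Perm (Fin (N+1)))

lemma goodL (hp : π (Fin.last N) = Fin.last N) :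
    ∀ j : Fin (N+1), j.val < N → (π j).val < N := by
  intro j hj
  have h1 : π j ≠ Fin.last N := by
    intro h
    have := π.injective (h.trans hp.symm)
    rw [this] at hj
    simp [Fin.last] at hj
  have h2 := (π j).isLt
  have h3 : (π j).val ≠ N := fun h => h1 (Fin.ext (by simpa using h))
  omega

lemma downFunL_eval (hgood : ∀ j : Fin (N+1), j.val < N → (π j).val < N) (j : Fin N) :
    (downFunL π j).val = (π ⟨j.val, by omega⟩).val := by
  unfold downFunL
  rw [dif_pos (hgood _ (by simpa using j.isLt))]

lemma downFunL_inj (hgood : ∀ j : Fin (N+1), j.val < N → (π j).val < N) :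
    Function.Injective (downFunL π) := by
  intro x y h
  have hv := congrArg Fin.val h
  rw [downFunL_eval π hgood, downFunL_eval π hgood] at hv
  have h2 := π.injective (Fin.ext hv)
  rw [Fin.mk.injEq] at h2
  exact Fin.ext h2

lemma downPermL_apply (hgood : ∀ j : Fin (N+1), j.val < N → (π j).val < N) :
    ⇑(downPermL π) = downFunL π := by
  unfold downPermL
  rw [dif_pos (downFunL_inj π hgood)]
  rfl

lemma downPermL_avoids (hgood : ∀ j : Fin (N+1), j.val < N → (π j).val < N)
    (h021 : avoidsPat ⇑π ![0,2,1]) (h1230 : avoidsPat ⇑π ![1,2,3,0]) :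
    avoidsPat ⇑(downPermL π) ![0,2,1] ∧ avoidsPat ⇑(downPermL π) ![1,2,3,0] := by
  constructor
  · intro hc
    rw [contains021_iff] at hc
    obtain ⟨a, b, c, hab, hbc, h1, h2⟩ := hc
    rw [downPermL_apply π hgood] at h1 h2
    rw [Fin.lt_def] at h1 h2 hab hbc
    rw [downFunL_eval π hgood, downFunL_eval π hgood] at h1 h2
    apply h021
    rw [contains021_iff]
    exact ⟨⟨a.val, by omega⟩, ⟨b.val, by omega⟩, ⟨c.val, by omega⟩,
      by rw [Fin.lt_def]; simpa, by rw [Fin.lt_def]; simpa,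
      Fin.lt_def.mpr h1, Fin.lt_def.mpr h2⟩
  · intro hc
    rw [contains1230_iff] at hc
    obtain ⟨a, b, c, d, hab, hbc, hcd, h1, h2, h3⟩ := hc
    rw [downPermL_apply π hgood] at h1 h2 h3
    rw [Fin.lt_def] at h1 h2 h3 hab hbc hcd
    rw [downFunL_eval π hgood, downFunL_eval π hgood] at h1 h2 h3
    apply h1230
    rw [contains1230_iff]
    exact ⟨⟨a.val, by omega⟩, ⟨b.val, by omega⟩, ⟨c.val, by omega⟩, ⟨d.val, by omega⟩,
      by rw [Fin.lt_def]; simpa, by rw [Fin.lt_def]; simpa, by rw [Fin.lt_def]; simpa,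
      Fin.lt_def.mpr h1, Fin.lt_def.mpr h2, Fin.lt_def.mpr h3⟩

lemma up_downL (hp : π (Fin.last N) = Fin.last N) :
    upPermL (downPermL π) = π := by
  have hgood := goodL π hp
  apply Equiv.ext
  intro i
  apply Fin.ext
  rw [upPermL_apply]
  by_cases h1 : i.val < N
  · rw [upFunL_eval_lt _ h1]
    have e1 : (downPermL π ⟨i.val, h1⟩).val = (π ⟨i.val, by omega⟩).val := by
      rw [downPermL_apply π hgood]
      exact downFunL_eval π hgood _
    rw [e1]
  · have : i = Fin.last N := Fin.ext (by have := i.isLt; simp [Fin.last]; omega)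
    rw [upFunL_eval_eq _ h1, this, hp]
    rfl

lemma down_upL (σ : Equiv.Perm (Fin N)) :
    downPermL (upPermL σ) = σ := by
  have hgood : ∀ j : Fin (N+1), j.val < N → ((upPermL σ) j).val < N := by
    intro j hj
    rw [upPermL_apply, upFunL_eval_lt σ hj]
    exact (σ _).isLt
  apply Equiv.ext
  intro j
  apply Fin.ext
  rw [downPermL_apply _ hgood, downFunL_eval _ hgood]
  rw [upPermL_apply, upFunL_eval_lt σ (by simpa using j.isLt)]

end LastCase

def Av (n : ℕ) : Finset (Equiv.Perm (Fin n)) :=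
  Finset.univ.filter (fun π => avoidsPat ⇑π ![0,2,1] ∧ avoidsPat ⇑π ![1,2,3,0])

lemma mem_Av {n : ℕ} (π : Equiv.Perm (Fin n)) :
    π ∈ Av n ↔ avoidsPat ⇑π ![0,2,1] ∧ avoidsPat ⇑π ![1,2,3,0] := by
  simp [Av]

lemma card_fiber_last (N : ℕ) :
    ((Av (N+1)).filter (fun π => π (Fin.last N) = Fin.last N)).card = (Av N).card := by
  apply Finset.card_nbij' (fun π => downPermL π) (fun σ => upPermL σ)
  · intro π hπ
    rw [Finset.mem_coe, Finset.mem_filter] at hπ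
    obtain ⟨hA, hp⟩ := hπ
    rw [mem_Av] at hA
    rw [Finset.mem_coe, mem_Av]
    exact downPermL_avoids π (goodL π hp) hA.1 hA.2
  · intro σ hσ
    rw [Finset.mem_coe, mem_Av] at hσ
    rw [Finset.mem_coe, Finset.mem_filter, mem_Av]
    refine ⟨upPermL_avoids σ hσ.1 hσ.2, ?_⟩
    apply Fin.ext
    rw [upPermL_apply, upFunL_eval_eq σ (by simp [Fin.last]), Fin.val_last]
  · intro π hπ
    rw [Finset.mem_coe, Finset.mem_filter] at hπ
    exact up_downL π hπ.2
  · intro σ _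
    exact down_upL σ

lemma card_fiber_lt (N : ℕ) (p : Fin (N+1)) (hplt : p.val < N) :
    ((Av (N+1)).filter (fun π => π p = Fin.last N)).card = (Av (N - p.val)).card := by
  apply Finset.card_nbij' (fun π => downPerm p π) (fun σ => upPerm p σ)
  · intro π hπ
    rw [Finset.mem_coe, Finset.mem_filter] at hπ
    obtain ⟨hA, hp⟩ := hπ
    rw [mem_Av] at hA
    rw [Finset.mem_coe, mem_Av]
    exact downPerm_avoids p π (D4 π hA.1 hA.2 p hp hplt) hA.1 hA.2
  · intro σ hσ
    rw [Finset.mem_coe, mem_Av] at hσ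
    rw [Finset.mem_coe, Finset.mem_filter, mem_Av]
    refine ⟨upPerm_avoids p σ hσ.1 hσ.2, ?_⟩
    apply Fin.ext
    rw [upPerm_apply, upFun_eval_eq p σ rfl, Fin.val_last]
  · intro π hπ
    rw [Finset.mem_coe, Finset.mem_filter] at hπ
    obtain ⟨hA, hp⟩ := hπ
    rw [mem_Av] at hA
    exact up_down p π hplt hA.1 hA.2 hp
  · intro σ _
    exact down_up p σ

lemma card_Av_succ (N : ℕ) :
    (Av (N+1)).card = ∑ p : Fin (N+1), ((Av (N+1)).filter (fun π => π p = Fin.last N)).card := by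
  rw [Finset.card_eq_sum_card_fiberwise
    (f := fun π : Equiv.Perm (Fin (N+1)) => π.symm (Fin.last N)) (t := Finset.univ)
    (fun x _ => Finset.mem_univ _)]
  apply Finset.sum_congr rfl
  intro p _
  congr 1
  apply Finset.filter_congr
  intro π _
  rw [Equiv.symm_apply_eq, eq_comm]

lemma card_Av_one : (Av 1).card = 1 := by
  have h : Av 1 = Finset.univ := by
    apply Finset.eq_univ_iff_forall.mpr
    intro π
    rw [mem_Av]
    constructor
    · rintro ⟨f, hf, -⟩
      have h1 := Fin.lt_def.mp (hf (show (0:Fin 3) < 1 by decide))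
      have := (f 0).isLt
      have := (f 1).isLt
      omega
    · rintro ⟨f, hf, -⟩
      have h1 := Fin.lt_def.mp (hf (show (0:Fin 4) < 1 by decide))
      have := (f 0).isLt
      have := (f 1).isLt
      omega
  rw [h, Finset.card_univ, Fintype.card_perm]
  simp

lemma card_Av_rec (N : ℕ) :
    (Av (N+1)).card = (Av N).card + ∑ i ∈ Finset.range N, (Av (i+1)).card := by
  rw [card_Av_succ N, Fin.sum_univ_castSucc]
  have hlast : ((Av (N+1)).filter
      (fun π => π (Fin.last N) = Fin.last N)).card = (Av N).card := card_fiber_last N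
  rw [hlast, add_comm]
  congr 1
  have h1 : ∀ i : Fin N, ((Av (N+1)).filter
      (fun π => π i.castSucc = Fin.last N)).card = (Av (N - i.val)).card := by
    intro i
    exact card_fiber_lt N i.castSucc (by simpa using i.isLt)
  rw [Finset.sum_congr rfl (fun i _ => h1 i)]
  rw [Fin.sum_univ_eq_sum_range (fun i => (Av (N - i)).card)]
  rw [← Finset.sum_range_reflect (fun i => (Av (i+1)).card) N]
  apply Finset.sum_congr rfl
  intro j hj
  rw [Finset.mem_range] at hj
  have e : N - j = N - 1 - j + 1 := by omega
  rw [e]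

lemma main_count : ∀ n : ℕ, (Av (n+1)).card = Nat.fib (2*n+1) ∧
    (∑ i ∈ Finset.range (n+1), (Av (i+1)).card) = Nat.fib (2*n+2) := by
  intro n
  induction n with
  | zero => simp [card_Av_one]
  | succ n ih =>
    obtain ⟨ih1, ih2⟩ := ih
    have h1 : (Av (n+2)).card = Nat.fib (2*(n+1)+1) := by
      rw [card_Av_rec (n+1), ih1, ih2]
      calc Nat.fib (2*n+1) + Nat.fib (2*n+2)
          = Nat.fib (2*n+1) + Nat.fib ((2*n+1)+1) := by
            rw [show 2*n+2 = (2*n+1)+1 from by ring]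
        _ = Nat.fib ((2*n+1)+2) := (Nat.fib_add_two).symm
        _ = Nat.fib (2*(n+1)+1) := by rw [show (2*n+1)+2 = 2*(n+1)+1 from by ring]
    refine ⟨h1, ?_⟩
    rw [Finset.sum_range_succ, ih2, h1]
    calc Nat.fib (2*n+2) + Nat.fib (2*(n+1)+1)
        = Nat.fib (2*n+2) + Nat.fib ((2*n+2)+1) := by
          rw [show 2*(n+1)+1 = (2*n+2)+1 from by ring]
      _ = Nat.fib ((2*n+2)+2) := (Nat.fib_add_two).symm
      _ = Nat.fib (2*(n+1)+2) := by rw [show (2*n+2)+2 = 2*(n+1)+2 from by ring]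

end Stmt2Aux


/-- The number of permutations of [n] avoiding 132 and 2341 (0-indexed: 021 and 1230)
equals the Fibonacci number F_{2n-1}. -/
theorem stmt2 (n : ℕ) (hn : 1 ≤ n) :
    Nat.card {π : Equiv.Perm (Fin n) //
      avoidsPat (⇑π) ![0,2,1] ∧ avoidsPat (⇑π) ![1,2,3,0]} = Nat.fib (2 * n - 1) := by
  obtain ⟨N, rfl⟩ : ∃ N, n = N + 1 := ⟨n - 1, by omega⟩
  rw [Nat.card_eq_fintype_card, Fintype.card_subtype]
  have h1 : (Finset.filter (fun π : Equiv.Perm (Fin (N+1)) =>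
      avoidsPat (⇑π) ![0,2,1] ∧ avoidsPat (⇑π) ![1,2,3,0]) Finset.univ) = Stmt2Aux.Av (N+1) := rfl
  have e : 2 * (N+1) - 1 = 2*N+1 := by omega
  rw [h1, (Stmt2Aux.main_count N).1, e]
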